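/- Let P and Q be real-rooted and squarefree real polynomials with {x ∈ ℝ | P(x) ≥ 0} = {x ∈ ℝ | Q(x) ≥ 0}. Then there exists a real number μ > 0 such that the map (x, y, z) ↦ (x, μy, μz) is a bijection from S_P onto S_Q (with inverse (x, y, z) ↦ (x, y/μ, z/μ)). -/

import Mathlib

open Polynomial

lemma card_roots_of_rrsf {P : Polynomial ℝ} (hsf : Squarefree P)
    (him : ∀ z : ℂ, Polynomial.aeval z P = 0 → z.im = 0) :
    Multiset.card P.roots = P.natDegree := by
  have hP0 : P ≠ 0 := hsf.ne_zero
  set f := algebraMap ℝ ℂ with hf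
  have hinj : Function.Injective f := f.injective
  have hmapne : P.map f ≠ 0 := (Polynomial.map_ne_zero_iff hinj).mpr hP0
  have hsep : (P.map f).Separable :=
    ((PerfectField.separable_iff_squarefree).mpr hsf).map
  have hnodupC : (P.map f).roots.Nodup := Polynomial.nodup_roots hsep
  have hsub : (P.map f).roots ⊆ P.roots.map f := by
    intro z hz
    have hz0 : Polynomial.aeval z P = 0 := by
      rw [aeval_def, ← eval_map]
      exact (mem_roots hmapne).1 hz
    have him0 := him z hz0
    have hzre : z = f z.re := by
      apply Complex.ext <;> simp [him0, hf]
    rw [hzre]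
    refine Multiset.mem_map_of_mem _ ?_
    rw [mem_roots hP0]
    have : f (P.eval z.re) = 0 := by
      rw [hzre] at hz0
      rw [← hz0, hf, ← aeval_algebraMap_apply_eq_algebraMap_eval]
    exact hinj (by simpa using this)
  have hcardC : Multiset.card (P.map f).roots = P.natDegree := by
    have hsplit : Splits (P.map f) := IsAlgClosed.splits _
    rw [← natDegree_map f]
    exact (hsplit.natDegree_eq_card_roots).symm
  have hle : (P.map f).roots ≤ P.roots.map f :=
    (Multiset.le_iff_subset hnodupC).mpr hsub
  have h1 : P.natDegree ≤ Multiset.card P.roots := by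
    have := Multiset.card_le_card hle
    simpa [hcardC] using this
  exact le_antisymm (P.card_roots' ) h1
open Polynomial

lemma eval_eq_prod {P : Polynomial ℝ} (hcard : Multiset.card P.roots = P.natDegree) (x : ℝ) :
    P.eval x = P.leadingCoeff * (P.roots.map fun r => x - r).prod := by
  conv_lhs => rw [(C_leadingCoeff_mul_prod_multiset_X_sub_C hcard).symm]
  rw [eval_mul, eval_C, eval_multiset_prod, Multiset.map_map]
  congr 1
  apply congrArg
  exact Multiset.map_congr rfl fun r _ => by simp

lemma sign_change {P : Polynomial ℝ} (hP0 : P ≠ 0) (hnodup : P.roots.Nodup)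
    (hcard : Multiset.card P.roots = P.natDegree) {r : ℝ} (hr : r ∈ P.roots)
    {ε : ℝ} (hε : 0 < ε) :
    ∃ x y : ℝ, |x - r| < ε ∧ P.eval x < 0 ∧ |y - r| < ε ∧ 0 < P.eval y := by
  classical
  set s' := P.roots.erase r with hs'
  have hrs : P.roots = r ::ₘ s' := (Multiset.cons_erase hr).symm
  have hner : ∀ u ∈ s', u ≠ r := by
    intro u hu he
    exact hnodup.notMem_erase (he ▸ hu)
  set T : Finset ℝ := insert ε (s'.toFinset.image fun u => |r - u|) with hT
  have hTne : T.Nonempty := ⟨ε, Finset.mem_insert_self _ _⟩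
  set δ := T.min' hTne with hδ
  have hTpos : ∀ a ∈ T, 0 < a := by
    intro a ha
    rcases Finset.mem_insert.1 ha with h1 | h1
    · exact h1 ▸ hε
    · rcases Finset.mem_image.1 h1 with ⟨u, hu, h2⟩
      have : u ≠ r := hner u (Multiset.mem_toFinset.1 hu)
      rw [← h2]
      exact abs_pos.2 (sub_ne_zero.2 (fun e => this e.symm))
  have hδpos : 0 < δ := hTpos _ (T.min'_mem hTne)
  set t := δ / 2 with ht
  have htpos : 0 < t := by positivity
  have htε : t < ε := by
    have : δ ≤ ε := T.min'_le ε (Finset.mem_insert_self _ _)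
    linarith
  have htu : ∀ u ∈ s', t < |r - u| := by
    intro u hu
    have : δ ≤ |r - u| := T.min'_le _ (Finset.mem_insert_of_mem
      (Finset.mem_image.2 ⟨u, Multiset.mem_toFinset.2 hu, rfl⟩))
    linarith
  -- the product of the two evaluations is negative
  have key : P.eval (r + t) * P.eval (r - t) < 0 := by
    rw [eval_eq_prod hcard, eval_eq_prod hcard]
    have hprod : (P.roots.map fun u => r + t - u).prod * (P.roots.map fun u => r - t - u).prod
        = (P.roots.map fun u => (r + t - u) * (r - t - u)).prod := by
      rw [Multiset.prod_map_mul]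
    have hsplit : (P.roots.map fun u => (r + t - u) * (r - t - u)).prod
        = (t * (-t)) * (s'.map fun u => (r + t - u) * (r - t - u)).prod := by
      rw [hrs, Multiset.map_cons, Multiset.prod_cons]
      congr 1
      ring
    have hpos : 0 < (s'.map fun u => (r + t - u) * (r - t - u)).prod := by
      apply Multiset.prod_pos
      intro a ha
      rcases Multiset.mem_map.1 ha with ⟨u, hu, rfl⟩
      have h1 : t < |r - u| := htu u hu
      have h2 : t ^ 2 < (r - u) ^ 2 := by
        have := sq_lt_sq' (by linarith [neg_abs_le (r - u)] : -(|r - u|) < t) h1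
        calc t ^ 2 < |r - u| ^ 2 := this
        _ = (r - u) ^ 2 := sq_abs _
      nlinarith
    have hlc : P.leadingCoeff ≠ 0 := leadingCoeff_ne_zero.2 hP0
    have : P.leadingCoeff * (P.roots.map fun u => r + t - u).prod *
        (P.leadingCoeff * (P.roots.map fun u => r - t - u).prod)
        = P.leadingCoeff ^ 2 * ((t * (-t)) *
          (s'.map fun u => (r + t - u) * (r - t - u)).prod) := by
      rw [← hsplit, ← hprod]; ring
    rw [this]
    have hlc2 : 0 < P.leadingCoeff ^ 2 := by positivity
    have hneg : t * (-t) < 0 := by nlinarith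
    exact mul_neg_of_pos_of_neg hlc2 (mul_neg_of_neg_of_pos hneg hpos)
  rcases mul_neg_iff.1 key with ⟨h1, h2⟩ | ⟨h1, h2⟩
  · exact ⟨r - t, r + t, by rw [abs_of_nonpos (by linarith)]; simp; linarith,
      h2, by rw [abs_of_nonneg (by linarith)]; simp [htε], h1⟩
  · exact ⟨r + t, r - t, by rw [abs_of_nonneg (by linarith)]; simp [htε],
      h1, by rw [abs_of_nonpos (by linarith)]; simp; linarith, h2⟩

lemma root_transfer {P Q : Polynomial ℝ} (hP0 : P ≠ 0) (hnodup : P.roots.Nodup)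
    (hcard : Multiset.card P.roots = P.natDegree)
    (h : {x : ℝ | 0 ≤ P.eval x} = {x : ℝ | 0 ≤ Q.eval x}) {r : ℝ} (hr : P.eval r = 0) :
    Q.eval r = 0 := by
  have hmem : ∀ x : ℝ, 0 ≤ P.eval x ↔ 0 ≤ Q.eval x := fun x => Set.ext_iff.mp h x
  have hQr : 0 ≤ Q.eval r := (hmem r).1 (le_of_eq hr.symm)
  rcases hQr.lt_or_eq with hpos | he
  · exfalso
    have hopen : IsOpen {x : ℝ | 0 < Q.eval x} := isOpen_lt continuous_const Q.continuous
    rcases Metric.isOpen_iff.1 hopen r hpos with ⟨ε, hε, hball⟩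
    obtain ⟨x, y, hx1, hx2, -, -⟩ := sign_change hP0 hnodup hcard ((mem_roots hP0).2 hr) hε
    have hxb : x ∈ Metric.ball r ε := by rwa [Metric.mem_ball, Real.dist_eq]
    have h1 : 0 < Q.eval x := hball hxb
    have h2 : 0 ≤ P.eval x := (hmem x).2 h1.le
    linarith
  · exact he.symm

/-- The affine surface `y² + z² = Q(x)` in `ℝ³`. -/
def SQ (Q : Polynomial ℝ) : Set (ℝ × ℝ × ℝ) :=
  {v | v.2.1 ^ 2 + v.2.2 ^ 2 = Q.eval v.1}

/-- A real polynomial which is nonconstant, has all of its complex roots real,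
and has no repeated roots. -/
def RealRootedSquarefree (P : Polynomial ℝ) : Prop :=
  0 < P.natDegree ∧ Squarefree P ∧ ∀ z : ℂ, Polynomial.aeval z P = 0 → z.im = 0

/-- If two real-rooted squarefree real polynomials have the same nonnegativity set,
then for some `μ > 0` the scaling `(x,y,z) ↦ (x, μy, μz)` is a bijection from
`S_P` onto `S_Q`, with inverse `(x,y,z) ↦ (x, y/μ, z/μ)`. -/
theorem scaling_bijection_of_nonneg_set_eq (P Q : Polynomial ℝ)
    (hP : RealRootedSquarefree P) (hQ : RealRootedSquarefree Q)
    (h : {x : ℝ | 0 ≤ P.eval x} = {x : ℝ | 0 ≤ Q.eval x}) :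
    ∃ μ : ℝ, 0 < μ ∧
      Set.BijOn (fun v : ℝ × ℝ × ℝ => (v.1, μ * v.2.1, μ * v.2.2)) (SQ P) (SQ Q) ∧
      Set.InvOn (fun v : ℝ × ℝ × ℝ => (v.1, v.2.1 / μ, v.2.2 / μ))
        (fun v : ℝ × ℝ × ℝ => (v.1, μ * v.2.1, μ * v.2.2)) (SQ P) (SQ Q) := by
  obtain ⟨hPd, hPsf, hPim⟩ := hP
  obtain ⟨hQd, hQsf, hQim⟩ := hQ
  have hP0 : P ≠ 0 := hPsf.ne_zero
  have hQ0 : Q ≠ 0 := hQsf.ne_zero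
  have hPcard : Multiset.card P.roots = P.natDegree := card_roots_of_rrsf hPsf hPim
  have hQcard : Multiset.card Q.roots = Q.natDegree := card_roots_of_rrsf hQsf hQim
  have hPnodup : P.roots.Nodup :=
    Polynomial.nodup_roots ((PerfectField.separable_iff_squarefree).mpr hPsf)
  have hQnodup : Q.roots.Nodup :=
    Polynomial.nodup_roots ((PerfectField.separable_iff_squarefree).mpr hQsf)
  -- root sets coincide
  have hroots : P.roots = Q.roots := by
    rw [Multiset.Nodup.ext hPnodup hQnodup]
    intro a
    rw [mem_roots hP0, mem_roots hQ0]
    constructor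
    · exact fun ha => root_transfer hP0 hPnodup hPcard h ha
    · exact fun ha => root_transfer hQ0 hQnodup hQcard h.symm ha
  -- eval comparison
  set c : ℝ := Q.leadingCoeff / P.leadingCoeff with hc
  have hlp : P.leadingCoeff ≠ 0 := leadingCoeff_ne_zero.2 hP0
  have hlq : Q.leadingCoeff ≠ 0 := leadingCoeff_ne_zero.2 hQ0
  have hc0 : c ≠ 0 := div_ne_zero hlq hlp
  have heval : ∀ x : ℝ, Q.eval x = c * P.eval x := by
    intro x
    rw [eval_eq_prod hPcard, eval_eq_prod hQcard, ← hroots, hc]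
    field_simp
  -- find a point with P > 0
  have hrootsne : P.roots ≠ 0 := by
    intro e
    rw [e] at hPcard
    simp at hPcard
    omega
  obtain ⟨r, hr⟩ := Multiset.exists_mem_of_ne_zero hrootsne
  obtain ⟨x, y, -, -, -, hy⟩ := sign_change hP0 hPnodup hPcard hr (one_pos)
  have hcpos : 0 < c := by
    have hQy : 0 ≤ Q.eval y := (Set.ext_iff.mp h y).1 hy.le
    have := heval y
    rcases hQy.lt_or_eq with hlt | heq
    · nlinarith
    · exfalso
      apply hc0
      have : c * P.eval y = 0 := by rw [← heval y, ← heq]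
      rcases mul_eq_zero.1 this with h1 | h1
      · exact h1
      · exfalso; linarith
  -- μ = √c
  refine ⟨Real.sqrt c, Real.sqrt_pos.2 hcpos, ?_⟩
  set μ := Real.sqrt c with hμ
  have hμpos : 0 < μ := Real.sqrt_pos.2 hcpos
  have hμsq : μ ^ 2 = c := Real.sq_sqrt hcpos.le
  have hμ0 : μ ≠ 0 := hμpos.ne'
  have hmapsto : Set.MapsTo (fun v : ℝ × ℝ × ℝ => (v.1, μ * v.2.1, μ * v.2.2)) (SQ P) (SQ Q) := by
    rintro ⟨x, y, z⟩ hv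
    simp only [SQ, Set.mem_setOf_eq] at hv ⊢
    rw [heval x, ← hv, ← hμsq]
    ring
  have hmapsto' : Set.MapsTo (fun v : ℝ × ℝ × ℝ => (v.1, v.2.1 / μ, v.2.2 / μ)) (SQ Q) (SQ P) := by
    rintro ⟨x, y, z⟩ hv
    simp only [SQ, Set.mem_setOf_eq] at hv ⊢
    have hPx : P.eval x = (Q.eval x) / c := by rw [heval x]; field_simp
    rw [hPx, ← hv, ← hμsq]
    field_simp
  have hinv : Set.InvOn (fun v : ℝ × ℝ × ℝ => (v.1, v.2.1 / μ, v.2.2 / μ))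
      (fun v : ℝ × ℝ × ℝ => (v.1, μ * v.2.1, μ * v.2.2)) (SQ P) (SQ Q) := by
    constructor
    · rintro ⟨x, y, z⟩ -
      simp only
      rw [mul_div_cancel_left₀ _ hμ0, mul_div_cancel_left₀ _ hμ0]
    · rintro ⟨x, y, z⟩ -
      simp only
      rw [mul_div_cancel₀ _ hμ0, mul_div_cancel₀ _ hμ0]
  exact ⟨hinv.bijOn hmapsto hmapsto', hinv⟩
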